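/- For all natural numbers n and m: ∫_ℝ fₙ(x) · fₘ(x) · exp(x²/2) dx = 0 if n ≠ m, and ∫_ℝ fₙ(x)² · exp(x²/2) dx = n! · √(2π), where fₙ denotes the n-th derivative of x ↦ exp(−x²/2). That is, the Hermite functions fₙ(x) = e^{−x²/2}Hₙ(x) are orthogonal in L²(e^{x²/2} dx). -/

import Mathlib

open MeasureTheory Real Polynomial

/-- `gaussDeriv n` is the `n`-th derivative of `x ↦ exp (-x²/2)`; it equals
`e^{-x²/2} Hₙ(x)` where `Hₙ` is (a multiple of) the probabilists' Hermite polynomial. -/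
noncomputable def gaussDeriv (n : ℕ) : ℝ → ℝ :=
  iteratedDeriv n (fun x : ℝ => Real.exp (-(x ^ 2) / 2))

/-- The real Hermite polynomial. -/
noncomputable def H (n : ℕ) : ℝ[X] := (hermite n).map (Int.castRingHom ℝ)

lemma natDegree_H (n : ℕ) : (H n).natDegree = n := by
  rw [H, Polynomial.natDegree_map_of_leadingCoeff_ne_zero _ (by simp [leadingCoeff_hermite]),
    natDegree_hermite]

lemma gaussDeriv_eq (n : ℕ) (x : ℝ) :
    gaussDeriv n x = (-1 : ℝ) ^ n * aeval x (H n) * Real.exp (-(x ^ 2) / 2) := by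
  have h : (fun x : ℝ => Real.exp (-(x ^ 2) / 2)) = fun y : ℝ => Real.exp (-(y ^ 2 / 2)) := by
    funext y; rw [neg_div]
  rw [gaussDeriv, iteratedDeriv_eq_iterate, h, Polynomial.deriv_gaussian_eq_hermite_mul_gaussian,
    neg_div, H]
  congr 2
  rw [show Int.castRingHom ℝ = algebraMap ℤ ℝ from rfl, Polynomial.aeval_map_algebraMap]

lemma integrable_poly_gauss (p : ℝ[X]) :
    Integrable (fun x : ℝ => aeval x p * Real.exp (-(x ^ 2) / 2)) := by
  have key : ∀ k : ℕ, Integrable (fun x : ℝ => x ^ k * Real.exp (-(x ^ 2) / 2)) := by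
    intro k
    have := integrable_rpow_mul_exp_neg_mul_sq (b := (1:ℝ)/2) (by norm_num) (s := (k : ℝ))
      (lt_of_lt_of_le (by norm_num) (Nat.cast_nonneg k))
    simp_rw [Real.rpow_natCast] at this
    convert this using 2 with x
    · rfl
    ring_nf
  have : (fun x : ℝ => aeval x p * Real.exp (-(x ^ 2) / 2)) =
      fun x : ℝ => ∑ i ∈ Finset.range (p.natDegree + 1),
        p.coeff i * (x ^ i * Real.exp (-(x ^ 2) / 2)) := by
    funext x
    rw [show (aeval x p : ℝ) = p.eval x from by rw [Polynomial.coe_aeval_eq_eval],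
      Polynomial.eval_eq_sum_range, Finset.sum_mul]
    congr 1; funext i; ring
  rw [this]
  exact integrable_finset_sum _ fun i _ => ((key i).const_mul _)

lemma integrable_poly_gaussDeriv (p : ℝ[X]) (k : ℕ) :
    Integrable (fun x : ℝ => aeval x p * gaussDeriv k x) := by
  have := (integrable_poly_gauss (p * H k)).const_mul ((-1 : ℝ) ^ k)
  convert this using 2 with x
  rw [gaussDeriv_eq, map_mul]; ring

lemma gaussDeriv_hasDerivAt (k : ℕ) (x : ℝ) :
    HasDerivAt (gaussDeriv k) (gaussDeriv (k + 1) x) x := by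
  have h : gaussDeriv (k + 1) x = deriv (gaussDeriv k) x := by
    rw [gaussDeriv, gaussDeriv, iteratedDeriv_succ]
  rw [h]
  apply DifferentiableAt.hasDerivAt
  have : gaussDeriv k = fun x : ℝ =>
      (-1 : ℝ) ^ k * aeval x (H k) * Real.exp (-(x ^ 2) / 2) := funext (gaussDeriv_eq k)
  rw [this]
  exact (((Polynomial.differentiable_aeval _).const_mul _).mul
    (((differentiable_pow 2).neg.div_const 2).exp)).differentiableAt

lemma ibp (p : ℝ[X]) (k : ℕ) :
    ∫ x : ℝ, aeval x p * gaussDeriv (k + 1) x =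
      -∫ x : ℝ, aeval x (derivative p) * gaussDeriv k x :=
  integral_mul_deriv_eq_deriv_mul_of_integrable
    (fun x _ => p.hasDerivAt_aeval x) (fun x _ => gaussDeriv_hasDerivAt k x)
    (integrable_poly_gaussDeriv p (k + 1)) (integrable_poly_gaussDeriv (derivative p) k)
    (integrable_poly_gaussDeriv p k)

lemma reduce (n : ℕ) (p : ℝ[X]) :
    ∫ x : ℝ, aeval x p * gaussDeriv n x =
      (-1 : ℝ) ^ n * ∫ x : ℝ, aeval x (derivative^[n] p) * Real.exp (-(x ^ 2) / 2) := by
  induction n generalizing p with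
  | zero => simp [gaussDeriv, iteratedDeriv_zero]
  | succ n ih =>
      rw [ibp p n, ih (derivative p), ← Function.iterate_succ_apply, pow_succ]
      ring

lemma exp_cancel (x : ℝ) : Real.exp (-(x ^ 2) / 2) * Real.exp (x ^ 2 / 2) = 1 := by
  rw [← Real.exp_add]; ring_nf; exact Real.exp_zero

lemma integrand_eq (n m : ℕ) (x : ℝ) :
    gaussDeriv n x * gaussDeriv m x * Real.exp (x ^ 2 / 2) =
      (-1 : ℝ) ^ m * (aeval x (H m) * gaussDeriv n x) := by
  rw [gaussDeriv_eq m x]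
  linear_combination ((-1 : ℝ) ^ m * aeval x (H m) * gaussDeriv n x) * exp_cancel x

lemma offdiag (n m : ℕ) (h : m < n) :
    ∫ x : ℝ, gaussDeriv n x * gaussDeriv m x * Real.exp (x ^ 2 / 2) = 0 := by
  simp_rw [integrand_eq]
  rw [integral_const_mul, reduce,
    Polynomial.iterate_derivative_eq_zero (by rw [natDegree_H]; exact h)]
  simp

/-- The Hermite functions `fₙ(x) = e^{−x²/2} Hₙ(x)` are orthogonal in
`L²(e^{x²/2} dx)`: `∫ fₙ fₘ e^{x²/2} dx = 0` for `n ≠ m`, and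
`∫ fₙ² e^{x²/2} dx = n! √(2π)`. -/
theorem gaussDeriv_orthogonal (n m : ℕ) :
    (n ≠ m → ∫ x : ℝ, gaussDeriv n x * gaussDeriv m x * Real.exp (x ^ 2 / 2) = 0) ∧
    ∫ x : ℝ, (gaussDeriv n x) ^ 2 * Real.exp (x ^ 2 / 2) =
      n.factorial * Real.sqrt (2 * Real.pi) := by
  constructor
  · intro hnm
    rcases lt_or_gt_of_ne hnm with h | h
    · rw [← offdiag m n h]
      congr 1; funext x; ring
    · exact offdiag n m h
  · have e : ∀ x : ℝ, gaussDeriv n x ^ 2 * Real.exp (x ^ 2 / 2) =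
        (-1 : ℝ) ^ n * (aeval x (H n) * gaussDeriv n x) := fun x => by
      rw [← integrand_eq n n x]; ring
    simp_rw [e]
    rw [integral_const_mul, reduce]
    have hd : derivative^[n] (H n) = Polynomial.C (n.factorial : ℝ) := by
      ext k
      rw [Polynomial.coeff_iterate_derivative]
      rcases Nat.eq_zero_or_pos k with rfl | hk
      · simp [H, Polynomial.coeff_map, Polynomial.coeff_hermite_self, Nat.descFactorial_self]
      · rw [show (H n).coeff (k + n) = ((hermite n).coeff (k + n) : ℝ) from
          Polynomial.coeff_map _ _, Polynomial.coeff_hermite_of_lt (by omega),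
          Polynomial.coeff_C, if_neg (by omega)]
        simp
    rw [hd]
    simp only [Polynomial.aeval_C]
    have hg : ∫ x : ℝ, Real.exp (-(x ^ 2) / 2) = Real.sqrt (2 * Real.pi) := by
      have := integral_gaussian (1/2)
      simp_rw [show ∀ x : ℝ, -(1/2 : ℝ) * x ^ 2 = -(x ^ 2) / 2 by intro x; ring] at this
      rw [this]
      congr 1
      rw [div_div_eq_mul_div, div_one, mul_comm]
    have : ∫ x : ℝ, (algebraMap ℝ ℝ) (n.factorial : ℝ) * Real.exp (-(x ^ 2) / 2) =
        (n.factorial : ℝ) * Real.sqrt (2 * Real.pi) := by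
      simp only [Algebra.algebraMap_self, RingHom.id_apply]
      rw [integral_const_mul, hg]
    rw [this, ← mul_assoc, ← mul_assoc, ← mul_pow]
    norm_num
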